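/- arXiv:1311.1464 — 3 statements merged into one kernel-verified Lean document; each statement's English description precedes it below -/
import Mathlib

section
/- With φ_P as above, for any two formal power series P, Q ∈ X·Q[[X]], the composition φ_P ∘ φ_Q equals φ_{P∘Q}, where P∘Q is the substitution of formal power series. -/
open PowerSeries

variable {A : Type*} [NonUnitalCommRing A] [Module ℚ A]
  [SMulCommClass ℚ A A] [IsScalarTower ℚ A A]

/-- `φ_P` on a basis word. -/
noncomputable def phiW (p : ℕ → ℚ) : List A → (List A →₀ ℚ)
  | [] => Finsupp.single [] 1
  | a :: w => ∑ i ∈ Finset.range (w.length + 1),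
      p (i + 1) • (phiW p (w.drop i)).mapDomain
        (List.cons ((w.take i).foldl (· * ·) a))
termination_by l => l.length
decreasing_by all_goals (simp [List.length_cons]; try omega)

/-- Linear extension of `φ_P` to `T(A)`. -/
noncomputable def phi (p : ℕ → ℚ) (x : List A →₀ ℚ) : List A →₀ ℚ :=
  x.sum fun w c => c • phiW p w

/-- Substitution of formal power series. -/
noncomputable def comp (P Q : PowerSeries ℚ) : PowerSeries ℚ :=
  PowerSeries.mk fun n => ∑ i ∈ Finset.range (n + 1),
    PowerSeries.coeff i P * PowerSeries.coeff n (Q ^ i)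

namespace PhiCompAux

lemma phiW_nil (p : ℕ → ℚ) : phiW (A := A) p [] = Finsupp.single [] 1 := by
  rw [phiW]

/-- The "first block" expansion used in `phiW` on a cons, with general coefficients `s`. -/
noncomputable def cw (p s : ℕ → ℚ) (b : A) (v : List A) : List A →₀ ℚ :=
  ∑ j ∈ Finset.range (v.length + 1),
    s j • (phiW p (v.drop j)).mapDomain (List.cons ((v.take j).foldl (· * ·) b))

lemma phiW_cons (p : ℕ → ℚ) (a : A) (w : List A) :
    phiW p (a :: w) = cw p (fun j => p (j + 1)) a w := by
  rw [phiW, cw]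

/-- `phi` as a linear map. -/
noncomputable def phiL (p : ℕ → ℚ) : (List A →₀ ℚ) →ₗ[ℚ] (List A →₀ ℚ) :=
  Finsupp.linearCombination ℚ (phiW p)

lemma phi_eq (p : ℕ → ℚ) (x : List A →₀ ℚ) : phi p x = phiL p x := by
  rw [phi, phiL, Finsupp.linearCombination_apply]

lemma phiL_single (p : ℕ → ℚ) (w : List A) (c : ℚ) :
    phiL p (Finsupp.single w c) = c • phiW p w :=
  Finsupp.linearCombination_single ℚ c w

/-- `psi p s b` is `x ↦ Σ_v x_v · cw p s b v`. -/
noncomputable def psi (p s : ℕ → ℚ) (b : A) : (List A →₀ ℚ) →ₗ[ℚ] (List A →₀ ℚ) :=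
  Finsupp.linearCombination ℚ (cw p s b)

lemma phiL_mapDomain (p : ℕ → ℚ) (b : A) (x : List A →₀ ℚ) :
    phiL p (Finsupp.mapDomain (List.cons b) x) = psi p (fun j => p (j + 1)) b x := by
  rw [phiL, Finsupp.linearCombination_mapDomain, psi]
  have h : phiW (A := A) p ∘ List.cons b = cw p (fun j => p (j + 1)) b := by
    funext v; exact phiW_cons p b v
  rw [h]

lemma cw_cons (p s : ℕ → ℚ) (b c : A) (v : List A) :
    cw p s b (c :: v) =
      s 0 • Finsupp.mapDomain (List.cons b) (phiW p (c :: v))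
        + cw p (fun j => s (j + 1)) (b * c) v := by
  rw [cw, cw, List.length_cons, Finset.sum_range_succ', add_comm]
  congr 1

lemma psi_mapDomain_cons (p s : ℕ → ℚ) (b c : A) (y : List A →₀ ℚ) :
    psi p s b (Finsupp.mapDomain (List.cons c) y) =
      s 0 • Finsupp.mapDomain (List.cons b) (psi p (fun j => p (j + 1)) c y)
        + psi p (fun j => s (j + 1)) (b * c) y := by
  induction y using Finsupp.induction_linear with
  | zero => simp
  | add f g hf hg =>
      simp only [Finsupp.mapDomain_add, map_add, smul_add, hf, hg]
      abel
  | single v k =>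
      simp only [Finsupp.mapDomain_single, psi, Finsupp.linearCombination_single, cw_cons,
        ← phiW_cons, Finsupp.mapDomain_smul, smul_add, smul_smul]
      rw [mul_comm]

/-- truncated coefficient of `s` composed with `mk q`. -/
noncomputable def T (q s : ℕ → ℚ) (m : ℕ) : ℚ :=
  ∑ j ∈ Finset.range (m + 1), s j * PowerSeries.coeff m ((PowerSeries.mk q) ^ j)

lemma T_zero (q s : ℕ → ℚ) : T q s 0 = s 0 := by
  simp [T]

lemma coeff_pow_mk_eq_zero {q : ℕ → ℚ} (hq : q 0 = 0) {j n : ℕ} (h : n < j) :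
    PowerSeries.coeff n ((PowerSeries.mk q) ^ j) = 0 := by
  have hX : (PowerSeries.X : PowerSeries ℚ) ∣ PowerSeries.mk q := by
    rw [PowerSeries.X_dvd_iff]; simpa using hq
  exact PowerSeries.X_pow_dvd_iff.mp (pow_dvd_pow_of_dvd hX j) n h

lemma T_succ {q : ℕ → ℚ} (hq : q 0 = 0) (s : ℕ → ℚ) (m : ℕ) :
    T q s (m + 1)
      = ∑ i ∈ Finset.range (m + 1), q (i + 1) * T q (fun j => s (j + 1)) (m - i) := by
  have hcoeff : ∀ j, PowerSeries.coeff (m + 1) ((PowerSeries.mk q) ^ (j + 1))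
      = ∑ k ∈ Finset.range (m + 1),
          q (k + 1) * PowerSeries.coeff (m - k) ((PowerSeries.mk q) ^ j) := by
    intro j
    rw [pow_succ', PowerSeries.coeff_mul, Finset.Nat.sum_antidiagonal_eq_sum_range_succ_mk,
      Finset.sum_range_succ']
    simp [PowerSeries.coeff_mk, hq, Nat.succ_sub_succ]
  rw [T, Finset.sum_range_succ']
  have h1 : s 0 * PowerSeries.coeff (m + 1) ((PowerSeries.mk q) ^ 0) = 0 := by
    simp [PowerSeries.coeff_one]
  rw [h1, add_zero]
  simp_rw [hcoeff, Finset.mul_sum]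
  rw [Finset.sum_comm]
  refine Finset.sum_congr rfl fun k hk => ?_
  rw [T, Finset.mul_sum,
    Finset.sum_subset (Finset.range_subset_range.mpr (by omega : m - k + 1 ≤ m + 1))
      (fun j hj hnj => ?_)]
  · exact Finset.sum_congr rfl fun j hj => by ring
  · have hjk : m - k < j := by
      simp only [Finset.mem_range] at hj hnj; omega
    rw [coeff_pow_mk_eq_zero hq hjk]
    ring

lemma sum_reindex {M : Type*} [AddCommMonoid M] (n : ℕ) (f : ℕ → ℕ → M) :
    ∑ i ∈ Finset.range (n + 1), ∑ j ∈ Finset.range (n - i + 1), f i j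
      = ∑ m ∈ Finset.range (n + 1), ∑ i ∈ Finset.range (m + 1), f i (m - i) := by
  rw [Finset.sum_sigma', Finset.sum_sigma']
  refine Finset.sum_nbij' (fun x => ⟨x.1 + x.2, x.1⟩) (fun x => ⟨x.2, x.1 - x.2⟩)
    ?_ ?_ ?_ ?_ ?_ <;> rintro ⟨i, j⟩ hx <;>
    simp only [Finset.mem_sigma, Finset.mem_range] at hx
  · simp only [Finset.mem_sigma, Finset.mem_range]; omega
  · simp only [Finset.mem_sigma, Finset.mem_range]; omega
  · have h : i + j - i = j := by omega
    show (⟨i, i + j - i⟩ : Σ _ : ℕ, ℕ) = ⟨i, j⟩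
    rw [h]
  · have h : j + (i - j) = i := by omega
    show (⟨j + (i - j), j⟩ : Σ _ : ℕ, ℕ) = ⟨i, j⟩
    rw [h]
  · show f i j = f i (i + j - i)
    congr 1
    omega

/-- Key lemma: `psi p s b` applied to `phiW q u`. -/
lemma psi_phiW {q : ℕ → ℚ} (hq : q 0 = 0) (p : ℕ → ℚ) :
    ∀ (n : ℕ) (u : List A), u.length ≤ n → ∀ (s : ℕ → ℚ) (b : A),
      psi p s b (phiW q u) = ∑ m ∈ Finset.range (u.length + 1),
        T q s m • Finsupp.mapDomain (List.cons ((u.take m).foldl (· * ·) b))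
          (phiL p (phiW q (u.drop m))) := by
  intro n
  induction n with
  | zero =>
      intro u hu s b
      obtain rfl : u = [] := List.length_eq_zero_iff.mp (Nat.le_zero.mp hu)
      simp [phiW_nil, psi, cw, phiL, Finsupp.linearCombination_single, T_zero]
  | succ n ih =>
      intro u hu s b
      cases u with
      | nil => simp [phiW_nil, psi, cw, phiL, Finsupp.linearCombination_single, T_zero]
      | cons a u' =>
        have hu' : u'.length ≤ n := by
          simpa [List.length_cons] using hu
        rw [phiW_cons q, cw, map_sum]
        simp_rw [map_smul, psi_mapDomain_cons, smul_add]
        rw [Finset.sum_add_distrib]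
        conv_rhs => rw [List.length_cons, Finset.sum_range_succ']
        conv_lhs => rw [add_comm]
        congr 1
        swap
        · -- s 0 - part equals the m = 0 term
          have : ∀ i ∈ Finset.range (u'.length + 1),
              q (i + 1) • (s 0 • Finsupp.mapDomain (List.cons b)
                (psi p (fun j => p (j + 1)) ((u'.take i).foldl (· * ·) a)
                  (phiW q (u'.drop i))))
              = s 0 • (q (i + 1) • Finsupp.mapDomain (List.cons b)
                  (phiL p (Finsupp.mapDomain
                    (List.cons ((u'.take i).foldl (· * ·) a)) (phiW q (u'.drop i))))) := by
            intro i hi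
            rw [phiL_mapDomain, smul_smul, smul_smul, mul_comm]
          rw [Finset.sum_congr rfl this, ← Finset.smul_sum]
          simp only [List.take_zero, List.foldl_nil, List.drop_zero, T_zero]
          congr 1
          rw [phiW_cons q, cw, map_sum, Finsupp.mapDomain_finset_sum]
          simp_rw [map_smul, Finsupp.mapDomain_smul]
        · -- tail part via induction hypothesis and reindexing
          have step : ∀ i ∈ Finset.range (u'.length + 1),
              q (i + 1) • psi p (fun j => s (j + 1))
                (b * ((u'.take i).foldl (· * ·) a)) (phiW q (u'.drop i))
              = ∑ m' ∈ Finset.range (u'.length - i + 1),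
                  q (i + 1) • (T q (fun j => s (j + 1)) m' •
                    Finsupp.mapDomain
                      (List.cons ((u'.take (i + m')).foldl (· * ·) (b * a)))
                      (phiL p (phiW q (u'.drop (i + m'))))) := by
            intro i hi
            rw [ih (u'.drop i) (le_trans (by rw [List.length_drop]; omega) hu'),
              List.length_drop, Finset.smul_sum]
            refine Finset.sum_congr rfl fun m' hm' => ?_
            have hfold : b * List.foldl (fun x1 x2 => x1 * x2) a (List.take i u')
                = List.foldl (fun x1 x2 => x1 * x2) (b * a) (List.take i u') :=
              List.foldl_assoc.symm
            rw [hfold, List.drop_drop, List.take_add, List.foldl_append]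
          rw [Finset.sum_congr rfl step, sum_reindex]
          refine Finset.sum_congr rfl fun m hm => ?_
          simp only [Finset.mem_range] at hm
          have hterm : ∀ i ∈ Finset.range (m + 1),
              q (i + 1) • (T q (fun j => s (j + 1)) (m - i) •
                Finsupp.mapDomain
                  (List.cons ((u'.take (i + (m - i))).foldl (· * ·) (b * a)))
                  (phiL p (phiW q (u'.drop (i + (m - i))))))
              = (q (i + 1) * T q (fun j => s (j + 1)) (m - i)) •
                  Finsupp.mapDomain (List.cons ((u'.take m).foldl (· * ·) (b * a)))
                    (phiL p (phiW q (u'.drop m))) := by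
            intro i hi
            simp only [Finset.mem_range] at hi
            have him : i + (m - i) = m := by omega
            rw [him, smul_smul]
          rw [Finset.sum_congr rfl hterm, ← Finset.sum_smul, ← T_succ hq]
          simp

/-- Main lemma: `phi p ∘ phi q = phi (T q p)` on basis words. -/
lemma phiL_phiW {q : ℕ → ℚ} (hq : q 0 = 0) (p : ℕ → ℚ) :
    ∀ (n : ℕ) (w : List A), w.length ≤ n → phiL p (phiW q w) = phiW (T q p) w := by
  intro n
  induction n with
  | zero =>
      intro w hw
      obtain rfl : w = [] := List.length_eq_zero_iff.mp (Nat.le_zero.mp hw)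
      simp [phiW_nil, phiL, Finsupp.linearCombination_single]
  | succ n ih =>
      intro w hw
      cases w with
      | nil => simp [phiW_nil, phiL, Finsupp.linearCombination_single]
      | cons a w' =>
        have hw' : w'.length ≤ n := by simpa [List.length_cons] using hw
        rw [phiW_cons q, cw, map_sum]
        simp_rw [map_smul, phiL_mapDomain]
        have step : ∀ i ∈ Finset.range (w'.length + 1),
            q (i + 1) • psi p (fun j => p (j + 1))
              ((w'.take i).foldl (· * ·) a) (phiW q (w'.drop i))
            = ∑ m' ∈ Finset.range (w'.length - i + 1),
                q (i + 1) • (T q (fun j => p (j + 1)) m' •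
                  Finsupp.mapDomain
                    (List.cons ((w'.take (i + m')).foldl (· * ·) a))
                    (phiW (T q p) (w'.drop (i + m')))) := by
          intro i hi
          rw [psi_phiW hq p n (w'.drop i) (le_trans (by rw [List.length_drop]; omega) hw'),
            List.length_drop, Finset.smul_sum]
          refine Finset.sum_congr rfl fun m' hm' => ?_
          rw [List.drop_drop, ih (w'.drop (i + m'))
            (le_trans (by rw [List.length_drop]; omega) hw'), List.take_add,
            List.foldl_append]
        rw [Finset.sum_congr rfl step, sum_reindex]
        rw [phiW_cons (T q p), cw]
        refine Finset.sum_congr rfl fun m hm => ?_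
        simp only [Finset.mem_range] at hm
        have hterm : ∀ i ∈ Finset.range (m + 1),
            q (i + 1) • (T q (fun j => p (j + 1)) (m - i) •
              Finsupp.mapDomain
                (List.cons ((w'.take (i + (m - i))).foldl (· * ·) a))
                (phiW (T q p) (w'.drop (i + (m - i)))))
            = (q (i + 1) * T q (fun j => p (j + 1)) (m - i)) •
                Finsupp.mapDomain (List.cons ((w'.take m).foldl (· * ·) a))
                  (phiW (T q p) (w'.drop m)) := by
          intro i hi
          simp only [Finset.mem_range] at hi
          have him : i + (m - i) = m := by omega
          rw [him, smul_smul]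
        rw [Finset.sum_congr rfl hterm, ← Finset.sum_smul, ← T_succ hq]

end PhiCompAux

open PhiCompAux in
/-- `φ_P ∘ φ_Q = φ_{P∘Q}` for `P, Q ∈ X·ℚ[[X]]`. -/
theorem phi_comp (p q : ℕ → ℚ) (hp : p 0 = 0) (hq : q 0 = 0) (x : List A →₀ ℚ) :
    phi p (phi q x) =
      phi (fun n => PowerSeries.coeff n
        (comp (PowerSeries.mk p) (PowerSeries.mk q))) x := by
  have hr : (fun n => PowerSeries.coeff n
      (comp (PowerSeries.mk p) (PowerSeries.mk q))) = T q p := by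
    funext n
    simp [comp, T, PowerSeries.coeff_mk]
  rw [hr]
  simp only [phi_eq]
  induction x using Finsupp.induction_linear with
  | zero => simp
  | add f g hf hg => rw [map_add, map_add, map_add, hf, hg]
  | single w c =>
      rw [phiL_single, map_smul, phiL_phiW hq p w.length w le_rfl, phiL_single]
end

section
/- If P(X) = X + Σ_{i≥2} p_i X^i is tangent to identity, then φ_P : T(A) → T(A) is a linear bijection. -/
variable {A : Type*} [NonUnitalCommRing A] [Module ℚ A]
  [SMulCommClass ℚ A A] [IsScalarTower ℚ A A]

omit [Module ℚ A] [SMulCommClass ℚ A A] [IsScalarTower ℚ A A] in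
lemma phiW_support_le (p : ℕ → ℚ) :
    ∀ n (w : List A), w.length ≤ n → ∀ u ∈ (phiW p w).support, u.length ≤ w.length := by
  classical
  intro n
  induction n with
  | zero =>
    intro w hw u hu
    match w, hw with
    | [], _ =>
      rw [phiW] at hu
      simp [Finsupp.support_single_ne_zero] at hu
      simp [hu]
  | succ n ih =>
    intro w hw u hu
    match w with
    | [] =>
      rw [phiW] at hu
      simp [Finsupp.support_single_ne_zero] at hu
      simp [hu]
    | a :: v =>
      rw [phiW] at hu
      have := Finsupp.support_finset_sum hu
      rw [Finset.mem_biUnion] at this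
      obtain ⟨i, hi, hui⟩ := this
      have hui' := Finsupp.support_smul hui
      have := Finsupp.mapDomain_support hui'
      rw [Finset.mem_image] at this
      obtain ⟨t, ht, rfl⟩ := this
      have hd : (v.drop i).length ≤ n := by
        simp only [List.length_cons] at hw
        simp [List.length_drop]; omega
      have := ih (v.drop i) hd t ht
      simp only [List.length_cons, List.length_drop] at *
      omega

set_option linter.unusedSectionVars false

omit [Module ℚ A] [SMulCommClass ℚ A A] [IsScalarTower ℚ A A] in
lemma phiW_apply_of_le (p : ℕ → ℚ) (hp1 : p 1 = 1) :
    ∀ n (w : List A), w.length ≤ n → ∀ u : List A, w.length ≤ u.length →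
      phiW p w u = Finsupp.single w (1 : ℚ) u := by
  classical
  intro n
  induction n with
  | zero =>
    intro w hw u _
    match w, hw with
    | [], _ => rw [phiW]
  | succ n ih =>
    intro w hw u hu
    match w with
    | [] => rw [phiW]
    | a :: v =>
      rw [phiW, Finsupp.finset_sum_apply]
      rw [Finset.sum_eq_single_of_mem 0 (by simp)]
      · simp only [List.take_zero, List.drop_zero, List.foldl_nil, zero_add, hp1, one_smul]
        match u with
        | b :: t =>
          simp only [List.length_cons, Nat.add_le_add_iff_right] at hu hw
          by_cases hb : b = a
          · subst hb
            rw [Finsupp.mapDomain_apply List.cons_injective]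
            rw [ih v hw t hu]
            simp [Finsupp.single_apply, List.cons.injEq]
          · have h1 : (phiW p v).mapDomain (List.cons a) (b :: t) = 0 := by
              rw [← Finsupp.notMem_support_iff]
              intro hmem
              have := Finsupp.mapDomain_support hmem
              rw [Finset.mem_image] at this
              obtain ⟨s, _, hs⟩ := this
              cases hs
              exact hb rfl
            rw [h1, Finsupp.single_apply, if_neg (fun h => hb (List.cons.injEq .. ▸ h).1.symm)]
      · intro i hi hi0
        have h1 : ((phiW p (v.drop i)).mapDomain
            (List.cons ((v.take i).foldl (· * ·) a))) u = 0 := by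
          rw [← Finsupp.notMem_support_iff]
          intro hmem
          have := Finsupp.mapDomain_support hmem
          rw [Finset.mem_image] at this
          obtain ⟨t, ht, rfl⟩ := this
          have hle := phiW_support_le p (v.drop i).length (v.drop i) le_rfl t ht
          simp only [List.length_cons, List.length_drop] at hu hw hle
          rw [Finset.mem_range] at hi
          omega
        simp [h1]

omit [Module ℚ A] [SMulCommClass ℚ A A] [IsScalarTower ℚ A A] in
lemma err_support (p : ℕ → ℚ) (hp1 : p 1 = 1) (w : List A)
    (u : List A) (hu : u ∈ (phiW p w - Finsupp.single w 1).support) :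
    u.length < w.length := by
  by_contra h
  rw [Finsupp.mem_support_iff, Finsupp.sub_apply,
    phiW_apply_of_le p hp1 w.length w le_rfl u (by omega), sub_self] at hu
  exact hu rfl

noncomputable def psiW (p : ℕ → ℚ) (hp1 : p 1 = 1) : List A → (List A →₀ ℚ)
  | w => Finsupp.single w 1 -
      ∑ u ∈ (phiW p w - Finsupp.single w 1).support.attach,
        ((phiW p w - Finsupp.single w 1 : List A →₀ ℚ) u.1) • psiW p hp1 u.1
termination_by w => w.length
decreasing_by exact err_support p hp1 _ u.1 u.2

omit [Module ℚ A] [SMulCommClass ℚ A A] [IsScalarTower ℚ A A] in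
lemma psi_phiW (p : ℕ → ℚ) (hp1 : p 1 = 1) (w : List A) :
    Finsupp.linearCombination ℚ (psiW p hp1) (phiW p w) = Finsupp.single w 1 := by
  have hw : phiW p w = Finsupp.single w 1 + (phiW p w - Finsupp.single w 1) := by abel
  rw [hw, map_add, Finsupp.linearCombination_single, one_smul,
    Finsupp.linearCombination_apply, Finsupp.sum, ← Finset.sum_attach]
  rw [psiW]
  abel

omit [Module ℚ A] [SMulCommClass ℚ A A] [IsScalarTower ℚ A A] in
lemma phi_psiW (p : ℕ → ℚ) (hp1 : p 1 = 1) :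
    ∀ n (w : List A), w.length ≤ n →
      Finsupp.linearCombination ℚ (phiW p) (psiW p hp1 w) = Finsupp.single w 1 := by
  intro n
  induction n with
  | zero =>
    intro w hw
    rw [psiW]
    have : (phiW p w - Finsupp.single w 1) = 0 := by
      ext u
      by_cases h : u ∈ (phiW p w - Finsupp.single w 1).support
      · exact absurd (err_support p hp1 w u h) (by omega)
      · simpa using Finsupp.notMem_support_iff.mp h
    rw [sub_eq_zero] at this
    simp [this, Finsupp.linearCombination_single]
  | succ n ih =>
    intro w hw
    rw [psiW, map_sub, Finsupp.linearCombination_single, one_smul, map_sum]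
    have h1 : ∀ u ∈ (phiW p w - Finsupp.single w 1).support.attach,
        Finsupp.linearCombination ℚ (phiW p)
          (((phiW p w - Finsupp.single w 1 : List A →₀ ℚ) u.1) • psiW p hp1 u.1)
        = Finsupp.single u.1 ((phiW p w - Finsupp.single w 1 : List A →₀ ℚ) u.1) := by
      intro u _
      rw [map_smul, ih u.1 (by have := err_support p hp1 w u.1 u.2; omega),
        Finsupp.smul_single, smul_eq_mul, mul_one]
    rw [Finset.sum_congr rfl h1, Finset.sum_attach _ (fun u =>
        Finsupp.single u ((phiW p w - Finsupp.single w 1 : List A →₀ ℚ) u))]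
    have h2 : (∑ x ∈ (phiW p w - Finsupp.single w 1 : List A →₀ ℚ).support,
        Finsupp.single x ((phiW p w - Finsupp.single w 1 : List A →₀ ℚ) x))
        = (phiW p w - Finsupp.single w 1 : List A →₀ ℚ) := Finsupp.sum_single _
    rw [h2]
    abel

/-- If `P = X + Σ_{i≥2} p_i X^i` is tangent to identity, then
`φ_P : T(A) → T(A)` is a linear bijection. -/
theorem phi_linear_bijective (p : ℕ → ℚ) (hp0 : p 0 = 0) (hp1 : p 1 = 1) :
    ∃ e : (List A →₀ ℚ) ≃ₗ[ℚ] (List A →₀ ℚ), ∀ x, e x = phi p x := by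
  refine ⟨LinearEquiv.ofLinear (Finsupp.linearCombination ℚ (phiW p))
    (Finsupp.linearCombination ℚ (psiW p hp1)) ?_ ?_, ?_⟩
  · apply Finsupp.lhom_ext
    intro w c
    simp only [LinearMap.comp_apply, LinearMap.id_apply, map_smul,
      Finsupp.linearCombination_single]
    rw [phi_psiW p hp1 w.length w le_rfl, Finsupp.smul_single, smul_eq_mul, mul_one]
  · apply Finsupp.lhom_ext
    intro w c
    simp only [LinearMap.comp_apply, LinearMap.id_apply, map_smul,
      Finsupp.linearCombination_single]
    rw [psi_phiW p hp1 w, Finsupp.smul_single, smul_eq_mul, mul_one]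
  · intro x
    simp [LinearEquiv.ofLinear_apply, Finsupp.linearCombination_apply, phi]
end

section
/- For the exponential series E₁(X) = e^X − 1, the map φ_{E₁} : T(A) → T(A) (the Hoffman isomorphism) intertwines the shuffle product and the quasi-shuffle product: φ_{E₁}(x ⧢ y) = φ_{E₁}(x) ⋆ φ_{E₁}(y) for all x, y ∈ T(A). -/
variable {A : Type*} [NonUnitalCommRing A] [Module ℚ A]
  [SMulCommClass ℚ A A] [IsScalarTower ℚ A A]

/-- The shuffle product of two basis words. -/
noncomputable def shW : List A → List A → (List A →₀ ℚ)
  | [], v => Finsupp.single v 1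
  | a :: w, [] => Finsupp.single (a :: w) 1
  | a :: w, b :: v =>
      (shW w (b :: v)).mapDomain (a :: ·) + (shW (a :: w) v).mapDomain (b :: ·)
termination_by u v => u.length + v.length
decreasing_by all_goals simp [List.length_cons]

/-- Bilinear extension of the shuffle product. -/
noncomputable def shL (x y : List A →₀ ℚ) : List A →₀ ℚ :=
  x.sum fun u c => y.sum fun v d => (c * d) • shW u v

/-- The quasi-shuffle product of two basis words. -/
noncomputable def qshW : List A → List A → (List A →₀ ℚ)
  | [], v => Finsupp.single v 1
  | a :: w, [] => Finsupp.single (a :: w) 1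
  | a :: w, b :: v =>
      (qshW w (b :: v)).mapDomain (a :: ·) + (qshW (a :: w) v).mapDomain (b :: ·)
        + (qshW w v).mapDomain ((a * b) :: ·)
termination_by u v => u.length + v.length
decreasing_by
  all_goals simp [List.length_cons]
  all_goals omega

/-- Bilinear extension of the quasi-shuffle product. -/
noncomputable def qshL (x y : List A →₀ ℚ) : List A →₀ ℚ :=
  x.sum fun u c => y.sum fun v d => (c * d) • qshW u v

-- ==== auxiliary development ====
set_option linter.unusedSectionVars false
set_option linter.deprecated false
namespace HoffmanAux

noncomputable def pp : ℕ → ℚ := fun n => (n.factorial : ℚ)⁻¹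

lemma foldl_mul_assoc (l : List A) (x y : A) :
    l.foldl (· * ·) (x * y) = x * l.foldl (· * ·) y := by
  induction l generalizing y with
  | nil => rfl
  | cons z l ih => simpa [mul_assoc] using ih (y * z)

lemma foldl_mul_comm (l : List A) (x y : A) :
    l.foldl (· * ·) (x * y) = l.foldl (· * ·) x * y := by
  rw [mul_comm x y, foldl_mul_assoc, mul_comm]

noncomputable def Phi : (List A →₀ ℚ) →ₗ[ℚ] (List A →₀ ℚ) :=
  Finsupp.linearCombination ℚ (phiW pp)

lemma phi_eq (x : List A →₀ ℚ) : phi pp x = Phi x := rfl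

noncomputable def F : ℕ → A → List A → (List A →₀ ℚ)
  | m, a, [] => pp m • Finsupp.single [a] 1
  | m, a, b :: w =>
      pp m • Finsupp.mapDomain (a :: ·) (phiW pp (b :: w)) + F (m + 1) (a * b) w
termination_by _ _ l => l.length
decreasing_by simp

noncomputable def CF (m : ℕ) (c : A) : (List A →₀ ℚ) →ₗ[ℚ] (List A →₀ ℚ) :=
  Finsupp.linearCombination ℚ (F m c)

noncomputable def Q : (List A →₀ ℚ) →ₗ[ℚ] (List A →₀ ℚ) →ₗ[ℚ] (List A →₀ ℚ) :=
  Finsupp.linearCombination ℚ (fun u => Finsupp.linearCombination ℚ (qshW u))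

lemma Q_apply (X Y : List A →₀ ℚ) : qshL X Y = Q X Y := by
  rw [Q, Finsupp.linearCombination_apply, LinearMap.finsupp_sum_apply, qshL]
  refine Finsupp.sum_congr fun u _ => ?_
  rw [LinearMap.smul_apply, Finsupp.linearCombination_apply, Finsupp.smul_sum]
  exact Finsupp.sum_congr fun v _ => by rw [smul_smul]

lemma total_single (f : List A → (List A →₀ ℚ)) (u : List A) :
    Finsupp.linearCombination ℚ f (Finsupp.single u 1) = f u := by
  simp [Finsupp.linearCombination_single]


-- equation lemmas
lemma phiW_nil : phiW pp ([] : List A) = Finsupp.single [] 1 := by rw [phiW]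

lemma phiW_cons (a : A) (w : List A) :
    phiW pp (a :: w) = ∑ i ∈ Finset.range (w.length + 1),
      pp (i + 1) • (phiW pp (w.drop i)).mapDomain
        (List.cons ((w.take i).foldl (· * ·) a)) := by
  rw [phiW]

lemma F_nil (m : ℕ) (a : A) : F m a [] = pp m • Finsupp.single [a] 1 := by rw [F]

lemma F_cons (m : ℕ) (a b : A) (w : List A) :
    F m a (b :: w) =
      pp m • Finsupp.mapDomain (a :: ·) (phiW pp (b :: w)) + F (m + 1) (a * b) w := by
  rw [F]

lemma F_eq_sum (w : List A) (m : ℕ) (a : A) :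
    F m a w = ∑ i ∈ Finset.range (w.length + 1),
      pp (i + m) • (phiW pp (w.drop i)).mapDomain
        (List.cons ((w.take i).foldl (· * ·) a)) := by
  induction w generalizing m a with
  | nil =>
      simp [F_nil, phiW_nil, Finsupp.mapDomain_single]
  | cons b w ih =>
      rw [F_cons, ih (m + 1) (a * b)]
      simp only [List.length_cons]
      rw [Finset.sum_range_succ'
        (fun i => pp (i + m) • (phiW pp ((b :: w).drop i)).mapDomain
          (List.cons (((b :: w).take i).foldl (· * ·) a)))]
      simp only [List.take_succ_cons, List.drop_succ_cons, List.foldl_cons, List.take_zero,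
        List.foldl_nil, List.drop_zero]
      rw [add_comm]
      congr 1
      · refine Finset.sum_congr rfl fun i _ => ?_
        congr 2
        omega
      · rw [Nat.zero_add]

lemma phiW_eq_F (a : A) (w : List A) : phiW pp (a :: w) = F 1 a w := by
  rw [phiW_cons, F_eq_sum]

lemma CF_single (m : ℕ) (c : A) (z : List A) :
    CF m c (Finsupp.single z 1) = F m c z := by
  simp [CF, Finsupp.linearCombination_single]

lemma Phi_single (z : List A) : Phi (Finsupp.single z 1) = phiW pp z := by
  simp [Phi, Finsupp.linearCombination_single]

lemma Phi_mapD (c : A) (X : List A →₀ ℚ) :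
    Phi (Finsupp.mapDomain (c :: ·) X) = CF 1 c X := by
  rw [Phi, CF, Finsupp.linearCombination_apply, Finsupp.linearCombination_apply,
    Finsupp.sum_mapDomain_index (by simp) (fun b m₁ m₂ => add_smul m₁ m₂ _)]
  exact Finsupp.sum_congr fun z _ => by rw [phiW_eq_F]

lemma mapD_sum (f : List A → List A) (X : List A →₀ ℚ) (g : List A → ℚ → (List A →₀ ℚ)) :
    Finsupp.mapDomain f (X.sum g) = X.sum fun z k => Finsupp.mapDomain f (g z k) := by
  exact map_finsuppSum (Finsupp.mapDomain.addMonoidHom f) X g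

lemma CF_mapD (m : ℕ) (a c : A) (X : List A →₀ ℚ) :
    CF m a (Finsupp.mapDomain (c :: ·) X) =
      pp m • Finsupp.mapDomain (a :: ·) (CF 1 c X) + CF (m + 1) (a * c) X := by
  rw [CF, Finsupp.linearCombination_apply,
    Finsupp.sum_mapDomain_index (by simp) (fun b m₁ m₂ => add_smul m₁ m₂ _)]
  rw [CF, CF, Finsupp.linearCombination_apply, Finsupp.linearCombination_apply,
    mapD_sum, Finsupp.smul_sum, ← Finsupp.sum_add]
  refine Finsupp.sum_congr fun z k => ?_
  rw [F_cons, smul_add, phiW_eq_F, Finsupp.mapDomain_smul, smul_comm]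

lemma shW_nil_left (v : List A) : shW ([] : List A) v = Finsupp.single v 1 := by rw [shW]

lemma shW_nil_right (u : List A) : shW u ([] : List A) = Finsupp.single u 1 := by
  cases u <;> rw [shW]

lemma shW_cons_cons (a b : A) (w v : List A) :
    shW (a :: w) (b :: v) =
      (shW w (b :: v)).mapDomain (a :: ·) + (shW (a :: w) v).mapDomain (b :: ·) := by
  rw [shW]

lemma qshW_nil_left (v : List A) : qshW ([] : List A) v = Finsupp.single v 1 := by rw [qshW]

lemma qshW_nil_right (u : List A) : qshW u ([] : List A) = Finsupp.single u 1 := by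
  cases u <;> rw [qshW]

lemma qshW_cons_cons (a b : A) (w v : List A) :
    qshW (a :: w) (b :: v) =
      (qshW w (b :: v)).mapDomain (a :: ·) + (qshW (a :: w) v).mapDomain (b :: ·)
        + (qshW w v).mapDomain ((a * b) :: ·) := by
  rw [qshW]

lemma term_congr' {x y a b : ℕ} {h1 h2 : A} {V W : List A →₀ ℚ}
    (hx : x = y) (hab : a = b) (hh : h1 = h2) (hV : V = W) :
    (((x : ℕ) : ℚ) * pp a) • Finsupp.mapDomain (List.cons h1) V =
      (((y : ℕ) : ℚ) * pp b) • Finsupp.mapDomain (List.cons h2) W := by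
  subst hx; subst hab; subst hh; subst hV; rfl

/-- the master lemma: first-block decomposition of `φ` applied to a shuffle,
with a pending first block. -/
lemma G : ∀ (N : ℕ) (w t : List A), w.length + t.length ≤ N → ∀ (m : ℕ) (c : A),
    CF m c (shW w t) = ∑ i ∈ Finset.range (w.length + 1), ∑ j ∈ Finset.range (t.length + 1),
      ((((i + j).choose i : ℕ) : ℚ) * pp (m + i + j)) •
        Finsupp.mapDomain
          (List.cons ((t.take j).foldl (· * ·) ((w.take i).foldl (· * ·) c)))
          (Phi (shW (w.drop i) (t.drop j))) := by
  intro N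
  induction N with
  | zero =>
      intro w t h m c
      rcases w with _ | ⟨d, w'⟩
      · rcases t with _ | ⟨e, t'⟩
        · simp [shW_nil_left, CF_single, F_nil, Phi_single, phiW_nil,
            Finsupp.mapDomain_single]
          ext l
          by_cases hl : l = [c] <;> simp [hl, Finsupp.single_apply, Finsupp.mul_apply, eq_comm]
        · simp at h
      · simp at h
  | succ N ih =>
      intro w t h m c
      rcases w with _ | ⟨d, w'⟩ <;> rcases t with _ | ⟨e, t'⟩
      · simp [shW_nil_left, CF_single, F_nil, Phi_single, phiW_nil,
          Finsupp.mapDomain_single]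
        ext l
        by_cases hl : l = [c] <;> simp [hl, Finsupp.single_apply, Finsupp.mul_apply, eq_comm]
      · -- w = [], t = e :: t'
        rw [shW_nil_left, CF_single, F_cons,
          show F (m+1) (c*e) t' = CF (m+1) (c*e) (shW ([]:List A) t') from
            (by rw [shW_nil_left, CF_single]),
          ih [] t' (by simp at h ⊢; omega) (m+1) (c*e)]
        simp only [List.length_nil, List.length_cons, zero_add, Finset.sum_range_one,
          List.take_nil, List.drop_nil, List.foldl_nil]
        rw [Finset.sum_range_succ'
          (fun x => (((x.choose 0 : ℕ) : ℚ) * pp (m + 0 + x)) •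
            Finsupp.mapDomain
              (List.cons (List.foldl (· * ·) c (List.take x (e :: t'))))
              (Phi (shW ([] : List A) (List.drop x (e :: t')))))]
        simp only [List.take_succ_cons, List.foldl_cons, List.drop_succ_cons,
          List.take_zero, List.foldl_nil, List.drop_zero, Nat.choose_zero_right,
          Nat.cast_one, one_mul, shW_nil_left, Phi_single]
        rw [add_comm]
        congr 1
        refine Finset.sum_congr rfl fun j _ => ?_
        congr 2
        omega
      · -- w = d :: w', t = []
        rw [shW_nil_right, CF_single, F_cons,
          show F (m+1) (c*d) w' = CF (m+1) (c*d) (shW w' ([]:List A)) from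
            (by rw [shW_nil_right, CF_single]),
          ih w' [] (by simp at h ⊢; omega) (m+1) (c*d)]
        simp only [List.length_nil, List.length_cons, zero_add, add_zero, Finset.sum_range_one,
          List.take_nil, List.drop_nil, List.foldl_nil]
        rw [Finset.sum_range_succ'
          (fun x => (((x.choose x : ℕ) : ℚ) * pp (m + x)) •
            Finsupp.mapDomain
              (List.cons (List.foldl (· * ·) c (List.take x (d :: w'))))
              (Phi (shW (List.drop x (d :: w')) ([] : List A))))]
        simp only [List.take_succ_cons, List.foldl_cons, List.drop_succ_cons,
          List.take_zero, List.foldl_nil, List.drop_zero, Nat.choose_self,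
          Nat.cast_one, one_mul, shW_nil_right, Phi_single]
        rw [add_comm]
        congr 1
        refine Finset.sum_congr rfl fun x _ => ?_
        congr 2
        omega
      · -- main case: w = d :: w', t = e :: t'
        simp only [List.length_cons]
        rw [shW_cons_cons, map_add, CF_mapD, CF_mapD, ← Phi_mapD, ← Phi_mapD,
          ih w' (e :: t') (by simp at h ⊢; omega) (m + 1) (c * d),
          ih (d :: w') t' (by simp at h ⊢; omega) (m + 1) (c * e),
          add_add_add_comm, ← smul_add, ← Finsupp.mapDomain_add, ← map_add,
          ← shW_cons_cons]
        simp only [List.length_cons]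
        have hS2 : (∑ i ∈ Finset.range (w'.length + 1 + 1), ∑ j ∈ Finset.range (t'.length + 1), ((((i + j).choose (i) : ℕ) : ℚ) * pp (m + 1 + i + j)) • Finsupp.mapDomain (List.cons (List.foldl (· * ·) (List.foldl (· * ·) (c * e) (List.take (i) (d :: w'))) (List.take (j) t'))) (Phi (shW (List.drop (i) (d :: w')) (List.drop (j) t'))))
            = (∑ i ∈ Finset.range (w'.length + 1), ∑ j ∈ Finset.range (t'.length + 1), ((((i + 1 + j).choose (i + 1) : ℕ) : ℚ) * pp (m + 1 + i + 1 + j)) • Finsupp.mapDomain (List.cons (List.foldl (· * ·) (List.foldl (· * ·) (c * e) (List.take (i + 1) (d :: w'))) (List.take (j) t'))) (Phi (shW (List.drop (i + 1) (d :: w')) (List.drop (j) t'))))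
              + ∑ j ∈ Finset.range (t'.length + 1), ((((0 + j).choose (0) : ℕ) : ℚ) * pp (m + 1 + 0 + j)) • Finsupp.mapDomain (List.cons (List.foldl (· * ·) (List.foldl (· * ·) (c * e) (List.take (0) (d :: w'))) (List.take (j) t'))) (Phi (shW (List.drop (0) (d :: w')) (List.drop (j) t'))) :=
          Finset.sum_range_succ' _ _
        have hrow : ∀ i ∈ Finset.range (w'.length + 1),
            (∑ j ∈ Finset.range (t'.length + 1 + 1), ((((i + 1 + j).choose (i + 1) : ℕ) : ℚ) * pp (m + (i + 1) + (j))) • Finsupp.mapDomain (List.cons (List.foldl (· * ·) (List.foldl (· * ·) (c) (List.take (i + 1) (d :: w'))) (List.take (j) (e :: t')))) (Phi (shW (List.drop (i + 1) (d :: w')) (List.drop (j) (e :: t')))))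
              = (∑ j ∈ Finset.range (t'.length + 1 + 1), ((((i + j).choose (i) : ℕ) : ℚ) * pp (m + 1 + i + j)) • Finsupp.mapDomain (List.cons (List.foldl (· * ·) (List.foldl (· * ·) (c * d) (List.take (i) w')) (List.take (j) (e :: t')))) (Phi (shW (List.drop (i) w') (List.drop (j) (e :: t'))))) + ∑ j ∈ Finset.range (t'.length + 1), ((((i + 1 + j).choose (i + 1) : ℕ) : ℚ) * pp (m + 1 + i + 1 + j)) • Finsupp.mapDomain (List.cons (List.foldl (· * ·) (List.foldl (· * ·) (c * e) (List.take (i + 1) (d :: w'))) (List.take (j) t'))) (Phi (shW (List.drop (i + 1) (d :: w')) (List.drop (j) t'))) := by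
          intro i _
          have hps : ∀ j ∈ Finset.range (t'.length + 1 + 1), (((((i + 1 + j).choose (i + 1) : ℕ) : ℚ) * pp (m + (i + 1) + (j))) • Finsupp.mapDomain (List.cons (List.foldl (· * ·) (List.foldl (· * ·) (c) (List.take (i + 1) (d :: w'))) (List.take (j) (e :: t')))) (Phi (shW (List.drop (i + 1) (d :: w')) (List.drop (j) (e :: t'))))) = (((((i + j).choose (i) : ℕ) : ℚ) * pp (m + 1 + i + j)) • Finsupp.mapDomain (List.cons (List.foldl (· * ·) (List.foldl (· * ·) (c * d) (List.take (i) w')) (List.take (j) (e :: t')))) (Phi (shW (List.drop (i) w') (List.drop (j) (e :: t'))))) + (((((i + j).choose (i + 1) : ℕ) : ℚ) * pp (m + (i + 1) + (j))) • Finsupp.mapDomain (List.cons (List.foldl (· * ·) (List.foldl (· * ·) (c) (List.take (i + 1) (d :: w'))) (List.take (j) (e :: t')))) (Phi (shW (List.drop (i + 1) (d :: w')) (List.drop (j) (e :: t'))))) := by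
            intro j _
            have hch : ((((i + 1 + j).choose (i + 1) : ℕ)) : ℚ)
                = (((i + j).choose i : ℕ) : ℚ) + (((i + j).choose (i + 1) : ℕ) : ℚ) := by
              rw [show i + 1 + j = (i + j) + 1 from by omega]
              push_cast [Nat.choose_succ_succ]
              ring
            rw [hch, add_mul, add_smul]
            congr 1
            exact term_congr' rfl (by omega)
              (by simp only [List.take_succ_cons, List.foldl_cons])
              (by simp only [List.drop_succ_cons])
          rw [Finset.sum_congr rfl hps, Finset.sum_add_distrib]
          congr 1
          have hpe : (∑ j ∈ Finset.range (t'.length + 1 + 1), ((((i + j).choose (i + 1) : ℕ) : ℚ) * pp (m + (i + 1) + (j))) • Finsupp.mapDomain (List.cons (List.foldl (· * ·) (List.foldl (· * ·) (c) (List.take (i + 1) (d :: w'))) (List.take (j) (e :: t')))) (Phi (shW (List.drop (i + 1) (d :: w')) (List.drop (j) (e :: t')))))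
              = (∑ j ∈ Finset.range (t'.length + 1), ((((i + j + 1).choose (i + 1) : ℕ) : ℚ) * pp (m + (i + 1) + (j + 1))) • Finsupp.mapDomain (List.cons (List.foldl (· * ·) (List.foldl (· * ·) (c) (List.take (i + 1) (d :: w'))) (List.take (j + 1) (e :: t')))) (Phi (shW (List.drop (i + 1) (d :: w')) (List.drop (j + 1) (e :: t'))))) + (((((i + 0).choose (i + 1) : ℕ) : ℚ) * pp (m + (i + 1) + (0))) • Finsupp.mapDomain (List.cons (List.foldl (· * ·) (List.foldl (· * ·) (c) (List.take (i + 1) (d :: w'))) (List.take (0) (e :: t')))) (Phi (shW (List.drop (i + 1) (d :: w')) (List.drop (0) (e :: t'))))) :=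
            Finset.sum_range_succ' _ _
          rw [hpe, show (((((i + 0).choose (i + 1) : ℕ) : ℚ) * pp (m + (i + 1) + (0))) • Finsupp.mapDomain (List.cons (List.foldl (· * ·) (List.foldl (· * ·) (c) (List.take (i + 1) (d :: w'))) (List.take (0) (e :: t')))) (Phi (shW (List.drop (i + 1) (d :: w')) (List.drop (0) (e :: t'))))) = 0 from by
            norm_num [Nat.choose_succ_self], add_zero]
          refine Finset.sum_congr rfl fun j _ => ?_
          refine term_congr' (by rw [Nat.add_right_comm i j 1]) (by omega)
            ?_ (by simp only [List.drop_succ_cons])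
          simp only [List.take_succ_cons, List.foldl_cons]
          rw [show c * e * d = c * d * e from mul_right_comm c e d,
            foldl_mul_comm (List.take i w') (c * d) e,
            foldl_mul_comm (List.take j t') (List.foldl (· * ·) (c * d) (List.take i w')) e]
        have hA : (∑ i ∈ Finset.range (w'.length + 1), ∑ j ∈ Finset.range (t'.length + 1 + 1), ((((i + 1 + j).choose (i + 1) : ℕ) : ℚ) * pp (m + (i + 1) + (j))) • Finsupp.mapDomain (List.cons (List.foldl (· * ·) (List.foldl (· * ·) (c) (List.take (i + 1) (d :: w'))) (List.take (j) (e :: t')))) (Phi (shW (List.drop (i + 1) (d :: w')) (List.drop (j) (e :: t')))))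
            = (∑ i ∈ Finset.range (w'.length + 1), ∑ j ∈ Finset.range (t'.length + 1 + 1), ((((i + j).choose (i) : ℕ) : ℚ) * pp (m + 1 + i + j)) • Finsupp.mapDomain (List.cons (List.foldl (· * ·) (List.foldl (· * ·) (c * d) (List.take (i) w')) (List.take (j) (e :: t')))) (Phi (shW (List.drop (i) w') (List.drop (j) (e :: t')))))
              + ∑ i ∈ Finset.range (w'.length + 1), ∑ j ∈ Finset.range (t'.length + 1), ((((i + 1 + j).choose (i + 1) : ℕ) : ℚ) * pp (m + 1 + i + 1 + j)) • Finsupp.mapDomain (List.cons (List.foldl (· * ·) (List.foldl (· * ·) (c * e) (List.take (i + 1) (d :: w'))) (List.take (j) t'))) (Phi (shW (List.drop (i + 1) (d :: w')) (List.drop (j) t'))) := by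
          rw [Finset.sum_congr rfl hrow, Finset.sum_add_distrib]
        have hB : (∑ j ∈ Finset.range (t'.length + 1), ((((0 + j + 1).choose (0) : ℕ) : ℚ) * pp (m + (0) + (j + 1))) • Finsupp.mapDomain (List.cons (List.foldl (· * ·) (List.foldl (· * ·) (c) (List.take (0) (d :: w'))) (List.take (j + 1) (e :: t')))) (Phi (shW (List.drop (0) (d :: w')) (List.drop (j + 1) (e :: t'))))) = ∑ j ∈ Finset.range (t'.length + 1), ((((0 + j).choose (0) : ℕ) : ℚ) * pp (m + 1 + 0 + j)) • Finsupp.mapDomain (List.cons (List.foldl (· * ·) (List.foldl (· * ·) (c * e) (List.take (0) (d :: w'))) (List.take (j) t'))) (Phi (shW (List.drop (0) (d :: w')) (List.drop (j) t'))) := by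
          refine Finset.sum_congr rfl fun j _ => ?_
          refine term_congr' (by simp) (by omega) ?_ (by simp only [List.drop_succ_cons, List.drop_zero])
          simp only [List.take_succ_cons, List.foldl_cons, List.take_zero, List.foldl_nil]
        have hC : (((((0 + 0).choose (0) : ℕ) : ℚ) * pp (m + (0) + (0))) • Finsupp.mapDomain (List.cons (List.foldl (· * ·) (List.foldl (· * ·) (c) (List.take (0) (d :: w'))) (List.take (0) (e :: t')))) (Phi (shW (List.drop (0) (d :: w')) (List.drop (0) (e :: t'))))) = pp m • Finsupp.mapDomain (c :: ·) (Phi (shW (d :: w') (e :: t'))) := by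
          simp
        have hD : (∑ i ∈ Finset.range (w'.length + 1 + 1), ∑ j ∈ Finset.range (t'.length + 1 + 1), ((((i + j).choose (i) : ℕ) : ℚ) * pp (m + (i) + (j))) • Finsupp.mapDomain (List.cons (List.foldl (· * ·) (List.foldl (· * ·) (c) (List.take (i) (d :: w'))) (List.take (j) (e :: t')))) (Phi (shW (List.drop (i) (d :: w')) (List.drop (j) (e :: t')))))
            = (∑ i ∈ Finset.range (w'.length + 1), ∑ j ∈ Finset.range (t'.length + 1 + 1), ((((i + 1 + j).choose (i + 1) : ℕ) : ℚ) * pp (m + (i + 1) + (j))) • Finsupp.mapDomain (List.cons (List.foldl (· * ·) (List.foldl (· * ·) (c) (List.take (i + 1) (d :: w'))) (List.take (j) (e :: t')))) (Phi (shW (List.drop (i + 1) (d :: w')) (List.drop (j) (e :: t')))))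
              + ((∑ j ∈ Finset.range (t'.length + 1), ((((0 + j + 1).choose (0) : ℕ) : ℚ) * pp (m + (0) + (j + 1))) • Finsupp.mapDomain (List.cons (List.foldl (· * ·) (List.foldl (· * ·) (c) (List.take (0) (d :: w'))) (List.take (j + 1) (e :: t')))) (Phi (shW (List.drop (0) (d :: w')) (List.drop (j + 1) (e :: t'))))) + (((((0 + 0).choose (0) : ℕ) : ℚ) * pp (m + (0) + (0))) • Finsupp.mapDomain (List.cons (List.foldl (· * ·) (List.foldl (· * ·) (c) (List.take (0) (d :: w'))) (List.take (0) (e :: t')))) (Phi (shW (List.drop (0) (d :: w')) (List.drop (0) (e :: t')))))) := by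
          rw [Finset.sum_range_succ' (fun i => ∑ j ∈ Finset.range (t'.length + 1 + 1), ((((i + j).choose (i) : ℕ) : ℚ) * pp (m + (i) + (j))) • Finsupp.mapDomain (List.cons (List.foldl (· * ·) (List.foldl (· * ·) (c) (List.take (i) (d :: w'))) (List.take (j) (e :: t')))) (Phi (shW (List.drop (i) (d :: w')) (List.drop (j) (e :: t')))))]
          congr 1
          exact Finset.sum_range_succ' _ _
        rw [hD, hA, hB, hC, hS2]
        abel

lemma Q_single_single (u v : List A) (c d : ℚ) :
    Q (Finsupp.single u c) (Finsupp.single v d) = (c * d) • qshW u v := by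
  simp [Q, Finsupp.linearCombination_single, smul_smul]

lemma Q_nil_left (Y : List A →₀ ℚ) : Q (Finsupp.single ([] : List A) 1) Y = Y := by
  rw [← Q_apply, qshL, Finsupp.sum_single_index (by simp)]
  rw [Finsupp.sum_congr (g2 := fun v d => Finsupp.single v d)
    (fun v _ => by rw [qshW_nil_left, one_mul, Finsupp.smul_single, smul_eq_mul, mul_one])]
  exact Finsupp.sum_single Y

lemma Q_nil_right (X : List A →₀ ℚ) : Q X (Finsupp.single ([] : List A) 1) = X := by
  rw [← Q_apply, qshL]
  rw [Finsupp.sum_congr (g2 := fun u c => Finsupp.single u c)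
    (fun u _ => by
      rw [Finsupp.sum_single_index (by simp), qshW_nil_right, mul_one,
        Finsupp.smul_single, smul_eq_mul, mul_one])]
  exact Finsupp.sum_single X

lemma mapD_finset_sum (f : List A → List A) (s : Finset ℕ) (g : ℕ → (List A →₀ ℚ)) :
    Finsupp.mapDomain f (∑ i ∈ s, g i) = ∑ i ∈ s, Finsupp.mapDomain f (g i) :=
  map_sum (Finsupp.mapDomain.addMonoidHom f) g s

lemma Q_mapD (x y : A) (X Y : List A →₀ ℚ) :
    Q (Finsupp.mapDomain (x :: ·) X) (Finsupp.mapDomain (y :: ·) Y)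
      = Finsupp.mapDomain (x :: ·) (Q X (Finsupp.mapDomain (y :: ·) Y))
        + Finsupp.mapDomain (y :: ·) (Q (Finsupp.mapDomain (x :: ·) X) Y)
        + Finsupp.mapDomain ((x * y) :: ·) (Q X Y) := by
  induction X using Finsupp.induction_linear with
  | zero => simp
  | add f g hf hg =>
      simp only [Finsupp.mapDomain_add, map_add, LinearMap.add_apply, hf, hg]
      abel
  | single z k =>
      induction Y using Finsupp.induction_linear with
      | zero => simp
      | add f g hf hg =>
          simp only [Finsupp.mapDomain_add, map_add, LinearMap.add_apply, hf, hg]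
          abel
      | single z' k' =>
          simp only [Finsupp.mapDomain_single, Q_single_single, qshW_cons_cons,
            smul_add, Finsupp.mapDomain_smul, Finsupp.mapDomain_add]

lemma pp_key (i j : ℕ) :
    (((i + (j + 1)).choose i : ℕ) : ℚ) * pp (1 + i + (j + 1))
      + (((i + 1 + j).choose (i + 1) : ℕ) : ℚ) * pp (1 + (i + 1) + j)
      = pp (i + 1) * pp (j + 1) := by
  have h1 : (i + j + 1).choose i + (i + j + 1).choose (i + 1) = (i + j + 2).choose (i + 1) :=
    (Nat.choose_succ_succ (i + j + 1) i).symm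
  have h3 : ((i + j + 2).choose (i + 1)) * ((i + 1).factorial * (j + 1).factorial)
      = (i + j + 2).factorial := by
    have h := Nat.choose_mul_factorial_mul_factorial (show i + 1 ≤ i + j + 2 by omega)
    rw [show i + j + 2 - (i + 1) = j + 1 from by omega] at h
    rw [← mul_assoc]
    exact h
  simp only [pp]
  rw [show i + (j + 1) = i + j + 1 from by omega,
    show 1 + i + (j + 1) = i + j + 2 from by omega,
    show i + 1 + j = i + j + 1 from by omega,
    show 1 + (i + 1) + j = i + j + 2 from by omega, ← add_mul]
  rw [show (((i + j + 1).choose i : ℕ) : ℚ) + (((i + j + 1).choose (i + 1) : ℕ) : ℚ)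
      = (((i + j + 2).choose (i + 1) : ℕ) : ℚ) from by exact_mod_cast h1]
  have hne : ∀ n : ℕ, ((n.factorial : ℚ)) ≠ 0 :=
    fun n => Nat.cast_ne_zero.mpr (Nat.factorial_ne_zero n)
  field_simp
  rw [← mul_assoc] at h3
  exact_mod_cast h3

lemma regroup_right (x : A) (X : List A →₀ ℚ) (b : A) (t : List A) :
    ∑ j ∈ Finset.range (t.length + 1), pp (j + 1) •
        Finsupp.mapDomain (x :: ·)
          (Q X ((phiW pp (t.drop j)).mapDomain (List.cons ((t.take j).foldl (· * ·) b))))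
      = Finsupp.mapDomain (x :: ·) (Q X (phiW pp (b :: t))) := by
  conv_rhs => rw [phiW_cons]
  rw [map_sum (Q X), mapD_finset_sum]
  refine Finset.sum_congr rfl fun j _ => ?_
  rw [map_smul, Finsupp.mapDomain_smul]

lemma regroup_left (y : A) (Y : List A →₀ ℚ) (a : A) (w : List A) :
    ∑ i ∈ Finset.range (w.length + 1), pp (i + 1) •
        Finsupp.mapDomain (y :: ·)
          (Q ((phiW pp (w.drop i)).mapDomain (List.cons ((w.take i).foldl (· * ·) a))) Y)
      = Finsupp.mapDomain (y :: ·) (Q (phiW pp (a :: w)) Y) := by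
  conv_rhs => rw [phiW_cons]
  rw [map_sum, LinearMap.sum_apply, mapD_finset_sum]
  refine Finset.sum_congr rfl fun i _ => ?_
  rw [map_smul, LinearMap.smul_apply, Finsupp.mapDomain_smul]

lemma Q_expand_right (x : A) (X : List A →₀ ℚ) (b : A) (t : List A) :
    Q (Finsupp.mapDomain (x :: ·) X) (phiW pp (b :: t))
      = Finsupp.mapDomain (x :: ·) (Q X (phiW pp (b :: t)))
        + ((∑ j ∈ Finset.range (t.length + 1), pp (j + 1) •
            Finsupp.mapDomain (List.cons ((t.take j).foldl (· * ·) b))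
              (Q (Finsupp.mapDomain (x :: ·) X) (phiW pp (t.drop j))))
          + ∑ j ∈ Finset.range (t.length + 1), pp (j + 1) •
            Finsupp.mapDomain (List.cons (x * (t.take j).foldl (· * ·) b))
              (Q X (phiW pp (t.drop j)))) := by
  conv_lhs => rw [phiW_cons]
  rw [map_sum (Q _)]
  rw [Finset.sum_congr rfl (fun j _ => by
    rw [map_smul, Q_mapD x ((t.take j).foldl (· * ·) b) X (phiW pp (t.drop j)),
      smul_add, smul_add])]
  rw [Finset.sum_add_distrib, Finset.sum_add_distrib, regroup_right, add_assoc]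

lemma middle_regroup (a b : A) (w t : List A) :
    (∑ i ∈ Finset.range (w.length + 1), pp (i + 1) •
        ∑ j ∈ Finset.range (t.length + 1), pp (j + 1) •
          Finsupp.mapDomain (List.cons ((t.take j).foldl (· * ·) b))
            (Q ((phiW pp (w.drop i)).mapDomain (List.cons ((w.take i).foldl (· * ·) a)))
              (phiW pp (t.drop j))))
      = ∑ j ∈ Finset.range (t.length + 1), pp (j + 1) •
          Finsupp.mapDomain (List.cons ((t.take j).foldl (· * ·) b))
            (Q (phiW pp (a :: w)) (phiW pp (t.drop j))) := by
  rw [Finset.sum_congr rfl (fun i (_ : i ∈ Finset.range (w.length + 1)) => Finset.smul_sum)]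
  rw [Finset.sum_comm]
  refine Finset.sum_congr rfl fun j _ => ?_
  rw [← regroup_left ((t.take j).foldl (· * ·) b) (phiW pp (t.drop j)) a w, Finset.smul_sum]
  exact Finset.sum_congr rfl fun i _ => smul_comm _ _ _

lemma third_regroup (a b : A) (w t : List A) :
    (∑ i ∈ Finset.range (w.length + 1), pp (i + 1) •
        ∑ j ∈ Finset.range (t.length + 1), pp (j + 1) • Finsupp.mapDomain
          (List.cons (List.foldl (· * ·) a (List.take i w) * List.foldl (· * ·) b (List.take j t)))
          (Q (phiW pp (List.drop i w)) (phiW pp (List.drop j t))))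
      = ∑ i ∈ Finset.range (w.length + 1), ∑ j ∈ Finset.range (t.length + 1), (pp (i + 1) * pp (j + 1)) • Finsupp.mapDomain (List.cons (List.foldl (· * ·) a (List.take (i) w) * List.foldl (· * ·) b (List.take (j) t))) (Q (phiW pp (List.drop (i) w)) (phiW pp (List.drop (j) t))) := by
  refine Finset.sum_congr rfl fun i _ => ?_
  rw [Finset.smul_sum]
  exact Finset.sum_congr rfl fun j _ => by rw [smul_smul]

lemma key : ∀ (N : ℕ) (u v : List A), u.length + v.length ≤ N →
    Phi (shW u v) = Q (phiW pp u) (phiW pp v) := by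
  intro N
  induction N with
  | zero =>
      intro u v h
      rcases u with _ | ⟨a, w⟩
      · rw [shW_nil_left, Phi_single, phiW_nil, Q_nil_left]
      · simp at h
  | succ N ih =>
      intro u v h
      rcases u with _ | ⟨a, w⟩
      · rw [shW_nil_left, Phi_single, phiW_nil, Q_nil_left]
      · rcases v with _ | ⟨b, t⟩
        · rw [shW_nil_right, Phi_single, phiW_nil, Q_nil_right]
        · -- main case
          simp only [List.length_cons] at h
          have hRight : Q (phiW pp (a :: w)) (phiW pp (b :: t))
              = (∑ i ∈ Finset.range (w.length + 1), pp (i + 1) • Finsupp.mapDomain (List.cons (List.foldl (· * ·) a (List.take (i) w))) (Q (phiW pp (List.drop (i) w)) (phiW pp (b :: t)))) + ((∑ j ∈ Finset.range (t.length + 1), pp (j + 1) • Finsupp.mapDomain (List.cons (List.foldl (· * ·) b (List.take (j) t))) (Q (phiW pp (a :: w)) (phiW pp (List.drop (j) t)))) + (∑ i ∈ Finset.range (w.length + 1), ∑ j ∈ Finset.range (t.length + 1), (pp (i + 1) * pp (j + 1)) • Finsupp.mapDomain (List.cons (List.foldl (· * ·) a (List.take (i) w) * List.foldl (· * ·) b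 (List.take (j) t))) (Q (phiW pp (List.drop (i) w)) (phiW pp (List.drop (j) t))))) := by
            conv_lhs => rw [phiW_cons a w]
            rw [map_sum, LinearMap.sum_apply]
            rw [Finset.sum_congr rfl (fun i (_ : i ∈ Finset.range (w.length + 1)) => by
              rw [map_smul, LinearMap.smul_apply, Q_expand_right, smul_add, smul_add])]
            rw [Finset.sum_add_distrib, Finset.sum_add_distrib, middle_regroup, third_regroup]
          have hD1 : (∑ i ∈ Finset.range (w.length + 1), ∑ j ∈ Finset.range (t.length + 1 + 1), ((((i + j).choose (i) : ℕ) : ℚ) * pp (1 + i + j)) • Finsupp.mapDomain (List.cons (List.foldl (· * ·) (List.foldl (· * ·) a (List.take (i) w)) (List.take (j) (b :: t)))) (Phi (shW (List.drop (i) w) (List.drop (j) (b :: t))))) = (∑ i ∈ Finset.range (w.length + 1), pp (i + 1) • Finsupp.mapDomain (List.cons (List.foldl (· * ·) a (List.take (i) w))) (Q (phiW pp (List.drop (i) w)) (phiW pp (b :: t)))) + (∑ i ∈ Finset.range (w.length + 1), ∑ j ∈ Finset.range (t.length + 1), ((((i + (j + 1)).choose (i) : ℕ) : ℚ) * pp (1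 + i + (j + 1))) • Finsupp.mapDomain (List.cons (List.foldl (· * ·) a (List.take (i) w) * List.foldl (· * ·) b (List.take (j) t))) (Q (phiW pp (List.drop (i) w)) (phiW pp (List.drop (j) t)))) := by
            have hrow : ∀ i ∈ Finset.range (w.length + 1),
                (∑ j ∈ Finset.range (t.length + 1 + 1), ((((i + j).choose (i) : ℕ) : ℚ) * pp (1 + i + j)) • Finsupp.mapDomain (List.cons (List.foldl (· * ·) (List.foldl (· * ·) a (List.take (i) w)) (List.take (j) (b :: t)))) (Phi (shW (List.drop (i) w) (List.drop (j) (b :: t)))))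
                  = pp (i + 1) • Finsupp.mapDomain (List.cons (List.foldl (· * ·) a (List.take (i) w))) (Q (phiW pp (List.drop (i) w)) (phiW pp (b :: t))) + ∑ j ∈ Finset.range (t.length + 1), ((((i + (j + 1)).choose (i) : ℕ) : ℚ) * pp (1 + i + (j + 1))) • Finsupp.mapDomain (List.cons (List.foldl (· * ·) a (List.take (i) w) * List.foldl (· * ·) b (List.take (j) t))) (Q (phiW pp (List.drop (i) w)) (phiW pp (List.drop (j) t))) := by
              intro i hi
              have hpeel : (∑ j ∈ Finset.range (t.length + 1 + 1), ((((i + j).choose (i) : ℕ) : ℚ) * pp (1 + i + j)) • Finsupp.mapDomain (List.cons (List.foldl (· * ·) (List.foldl (· * ·) a (List.take (i) w)) (List.take (j) (b :: t)))) (Phi (shW (List.drop (i) w) (List.drop (j) (b :: t)))))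
                  = (∑ j ∈ Finset.range (t.length + 1), ((((i + j + 1).choose (i) : ℕ) : ℚ) * pp (1 + i + j + 1)) • Finsupp.mapDomain (List.cons (List.foldl (· * ·) (List.foldl (· * ·) a (List.take (i) w)) (List.take (j + 1) (b :: t)))) (Phi (shW (List.drop (i) w) (List.drop (j + 1) (b :: t))))) + (((((i + 0).choose (i) : ℕ) : ℚ) * pp (1 + i + 0)) • Finsupp.mapDomain (List.cons (List.foldl (· * ·) (List.foldl (· * ·) a (List.take (i) w)) (List.take (0) (b :: t)))) (Phi (shW (List.drop (i) w) (List.drop (0) (b :: t))))) :=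
                Finset.sum_range_succ' _ _
              rw [hpeel, add_comm]
              congr 1
              · simp only [List.take_zero, List.foldl_nil, List.drop_zero, Nat.add_zero,
                  Nat.choose_self, Nat.cast_one, one_mul]
                rw [ih (w.drop i) (b :: t) (by simp only [List.length_drop, List.length_cons]; omega),
                  show 1 + i = i + 1 from by omega]
              · refine Finset.sum_congr rfl fun j _ => ?_
                simp only [List.take_succ_cons, List.foldl_cons, List.drop_succ_cons]
                rw [foldl_mul_assoc,
                  ih (w.drop i) (t.drop j) (by simp only [List.length_drop]; omega)]
                exact term_congr' (by rw [Nat.add_assoc]) (by omega) rfl rfl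
            rw [Finset.sum_congr rfl hrow, Finset.sum_add_distrib]
          have hD2 : (∑ i ∈ Finset.range (w.length + 1 + 1), ∑ j ∈ Finset.range (t.length + 1), ((((i + j).choose (i) : ℕ) : ℚ) * pp (1 + i + j)) • Finsupp.mapDomain (List.cons (List.foldl (· * ·) (List.foldl (· * ·) b (List.take (i) (a :: w))) (List.take (j) t))) (Phi (shW (List.drop (i) (a :: w)) (List.drop (j) t)))) = (∑ j ∈ Finset.range (t.length + 1), pp (j + 1) • Finsupp.mapDomain (List.cons (List.foldl (· * ·) b (List.take (j) t))) (Q (phiW pp (a :: w)) (phiW pp (List.drop (j) t)))) + (∑ i ∈ Finset.range (w.length + 1), ∑ j ∈ Finset.range (t.length + 1), ((((i + 1 + j).choose (i + 1) : ℕ) : ℚ) * pp (1 + (i + 1) + j)) • Finsupp.mapDomain (List.cons (List.foldl (· * ·) a (List.take (i) w) * List.foldl (· * ·) b (List.take (j) t))) (Q (phiW pp (List.drop (i) w)) (phiW pp (List.drop (j) t)))) := by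
            have hpeel : (∑ i ∈ Finset.range (w.length + 1 + 1), ∑ j ∈ Finset.range (t.length + 1), ((((i + j).choose (i) : ℕ) : ℚ) * pp (1 + i + j)) • Finsupp.mapDomain (List.cons (List.foldl (· * ·) (List.foldl (· * ·) b (List.take (i) (a :: w))) (List.take (j) t))) (Phi (shW (List.drop (i) (a :: w)) (List.drop (j) t))))
                = (∑ i ∈ Finset.range (w.length + 1), ∑ j ∈ Finset.range (t.length + 1), ((((i + 1 + j).choose (i + 1) : ℕ) : ℚ) * pp (1 + i + 1 + j)) • Finsupp.mapDomain (List.cons (List.foldl (· * ·) (List.foldl (· * ·) b (List.take (i + 1) (a :: w))) (List.take (j) t))) (Phi (shW (List.drop (i + 1) (a :: w)) (List.drop (j) t)))) + ∑ j ∈ Finset.range (t.length + 1), ((((0 + j).choose (0) : ℕ) : ℚ) * pp (1 + 0 + j)) • Finsupp.mapDomain (List.cons (List.foldl (· * ·) (List.foldl (· * ·) b (List.take (0) (a :: w))) (List.take (j) t))) (Phi (shW (List.drop (0) (a :: w)) (List.drop (j) t))) :=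
              Finset.sum_range_succ' _ _
            rw [hpeel, add_comm]
            congr 1
            · refine Finset.sum_congr rfl fun j _ => ?_
              simp only [List.take_zero, List.foldl_nil, List.drop_zero, Nat.zero_add,
                Nat.choose_zero_right, Nat.cast_one, one_mul]
              rw [ih (a :: w) (t.drop j) (by simp only [List.length_drop, List.length_cons]; omega),
                show 1 + 0 + j = j + 1 from by omega]
            · refine Finset.sum_congr rfl fun i _ => Finset.sum_congr rfl fun j _ => ?_
              simp only [List.take_succ_cons, List.foldl_cons, List.drop_succ_cons]
              rw [foldl_mul_assoc, foldl_mul_comm,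
                mul_comm (List.foldl (· * ·) b (List.take j t)) _,
                ih (w.drop i) (t.drop j) (by simp only [List.length_drop]; omega)]
              exact term_congr' rfl (by omega) rfl rfl
          have hM : (∑ i ∈ Finset.range (w.length + 1), ∑ j ∈ Finset.range (t.length + 1), ((((i + (j + 1)).choose (i) : ℕ) : ℚ) * pp (1 + i + (j + 1))) • Finsupp.mapDomain (List.cons (List.foldl (· * ·) a (List.take (i) w) * List.foldl (· * ·) b (List.take (j) t))) (Q (phiW pp (List.drop (i) w)) (phiW pp (List.drop (j) t)))) + (∑ i ∈ Finset.range (w.length + 1), ∑ j ∈ Finset.range (t.length + 1), ((((i + 1 + j).choose (i + 1) : ℕ) : ℚ) * pp (1 + (i + 1) + j)) • Finsupp.mapDomain (List.cons (List.foldl (· * ·) a (List.take (i) w) * List.foldl (· * ·) b (List.take (j) t))) (Q (phiW pp (List.drop (i) w)) (phiW pp (List.drop (j) t)))) = (∑ i ∈ Finset.range (w.length + 1), ∑ j ∈ Finset.range (t.length + 1), (pp (i + 1) * pp (j + 1)) • Finsupp.mapDomain (List.cons (List.foldl (· * ·) a (List.take (i) w) * List.foldl (· * ·) b (List.take (j)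 t))) (Q (phiW pp (List.drop (i) w)) (phiW pp (List.drop (j) t)))) := by
            rw [← Finset.sum_add_distrib]
            refine Finset.sum_congr rfl fun i _ => ?_
            rw [← Finset.sum_add_distrib]
            refine Finset.sum_congr rfl fun j _ => ?_
            rw [← add_smul, pp_key]
          rw [shW_cons_cons, map_add, Phi_mapD, Phi_mapD,
            G (w.length + (b :: t).length) w (b :: t) le_rfl 1 a,
            G ((a :: w).length + t.length) (a :: w) t le_rfl 1 b]
          simp only [List.length_cons]
          rw [hD1, hD2, add_add_add_comm, hM, add_assoc, hRight]

noncomputable def Sh : (List A →₀ ℚ) →ₗ[ℚ] (List A →₀ ℚ) →ₗ[ℚ] (List A →₀ ℚ) :=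
  Finsupp.linearCombination ℚ (fun u => Finsupp.linearCombination ℚ (shW u))

lemma Sh_apply (X Y : List A →₀ ℚ) : shL X Y = Sh X Y := by
  rw [Sh, Finsupp.linearCombination_apply, LinearMap.finsupp_sum_apply, shL]
  refine Finsupp.sum_congr fun u _ => ?_
  rw [LinearMap.smul_apply, Finsupp.linearCombination_apply, Finsupp.smul_sum]
  exact Finsupp.sum_congr fun v _ => by rw [smul_smul]

lemma Sh_single_single (u v : List A) (c d : ℚ) :
    Sh (Finsupp.single u c) (Finsupp.single v d) = (c * d) • shW u v := by
  simp [Sh, Finsupp.linearCombination_single, smul_smul]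

theorem hoffman_main (x y : List A →₀ ℚ) :
    phi pp (shL x y) = qshL (phi pp x) (phi pp y) := by
  rw [phi_eq, phi_eq, phi_eq, Q_apply, Sh_apply]
  induction x using Finsupp.induction_linear with
  | zero => simp
  | add f g hf hg => simp only [map_add, LinearMap.add_apply, hf, hg]
  | single u c =>
      induction y using Finsupp.induction_linear with
      | zero => simp
      | add f g hf hg => simp only [map_add, LinearMap.add_apply, hf, hg]
      | single v d =>
          rw [Sh_single_single, map_smul, key (u.length + v.length) u v le_rfl]
          simp only [Phi, Finsupp.linearCombination_single, map_smul, LinearMap.smul_apply,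
            smul_smul, mul_comm]

end HoffmanAux

/-- The Hoffman isomorphism `φ_{E₁}` (with coefficients `1/n!`) intertwines the
shuffle and quasi-shuffle products: `φ_{E₁}(x ⧢ y) = φ_{E₁}(x) ⋆ φ_{E₁}(y)`. -/
theorem hoffman_isomorphism (x y : List A →₀ ℚ) :
    phi (fun n => (n.factorial : ℚ)⁻¹) (shL x y) =
      qshL (phi (fun n => (n.factorial : ℚ)⁻¹) x)
        (phi (fun n => (n.factorial : ℚ)⁻¹) y) := by
  exact HoffmanAux.hoffman_main x y
end
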